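/- Let G be a claw-free, K_5-minor-free graph, and let v be a vertex of G such that v lies in a maximal clique K of G and in a maximal clique L of G whose vertex sets intersect exactly in {v}, where K is a clique on 4 vertices. Then for every 2-clique-coloring φ' of G − v in which the vertices of K − v are all one color and the vertices of L − v are all the other color, there is no obstruction via any path from v avoiding K: concretely, every vertex q₁ outside K that together with K − v forms a clique and is colored differently from K − v lies in a different connected component of G − V(K − v) than v does. -/

import Mathlib

open SimpleGraph

/-- `H` is a minor of `G`: there is a family of pairwise disjoint nonempty connected
branch sets in `G`, one for each vertex of `H`, with an edge of `G` between the branch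
sets of any two adjacent vertices of `H`. -/
def SimpleGraph.HasMinor {V W : Type*} (G : SimpleGraph V) (H : SimpleGraph W) : Prop :=
  ∃ f : W → Set V,
    (∀ w, (f w).Nonempty) ∧
    (∀ w, (G.induce (f w)).Connected) ∧
    (∀ w₁ w₂, w₁ ≠ w₂ → Disjoint (f w₁) (f w₂)) ∧
    (∀ w₁ w₂, H.Adj w₁ w₂ → ∃ v₁ ∈ f w₁, ∃ v₂ ∈ f w₂, G.Adj v₁ v₂)

/-- `G` contains no induced subgraph isomorphic to the claw `K_{1,3}`. -/
def SimpleGraph.ClawFree {V : Type*} (G : SimpleGraph V) : Prop :=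
  IsEmpty (completeBipartiteGraph (Fin 1) (Fin 3) ↪g G)

/-- `s` is a maximal clique of `G`. -/
def SimpleGraph.IsMaxClique {V : Type*} (G : SimpleGraph V) (s : Set V) : Prop :=
  G.IsClique s ∧ ∀ t : Set V, G.IsClique t → s ⊆ t → s = t

/-- `c` is a clique-coloring of `G`: no maximal clique with at least two vertices
is monochromatic. -/
def SimpleGraph.IsCliqueColoring {V : Type*} (G : SimpleGraph V) {k : ℕ} (c : V → Fin k) : Prop :=
  ∀ s : Set V, G.IsMaxClique s → s.Nontrivial → ∃ u ∈ s, ∃ v ∈ s, c u ≠ c v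

/-- `G` is `k`-clique-colorable. -/
def SimpleGraph.CliqueColorable {V : Type*} (G : SimpleGraph V) (k : ℕ) : Prop :=
  ∃ c : V → Fin k, G.IsCliqueColoring c

/-- `G` is an odd cycle, i.e. isomorphic to `C_n` for some odd `n ≥ 3`. -/
def SimpleGraph.IsOddCycle {V : Type*} (G : SimpleGraph V) : Prop :=
  ∃ n : ℕ, 3 ≤ n ∧ Odd n ∧ Nonempty (G ≃g cycleGraph n)

/-- `D` meets every (nonempty) maximal clique of `G`. -/
def SimpleGraph.IsCliqueTransversal {V : Type*} (G : SimpleGraph V) (D : Set V) : Prop :=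
  ∀ s : Set V, G.IsMaxClique s → s.Nonempty → (D ∩ s).Nonempty

/-- `G` is `H`-minor-free, but adding any edge between two distinct nonadjacent
vertices creates an `H` minor. -/
def SimpleGraph.EdgeMaximalMinorFree {V W : Type*} (G : SimpleGraph V) (H : SimpleGraph W) : Prop :=
  ¬ G.HasMinor H ∧ ∀ u v : V, u ≠ v → ¬ G.Adj u v →
    (G ⊔ fromEdgeSet {s(u, v)}).HasMinor H


private lemma connected_induce_singleton {V : Type*} (G : SimpleGraph V) (a : V) :
    (G.induce {a}).Connected := by
  rw [connected_iff]
  exact ⟨fun x y => by rw [Subsingleton.elim x y], ⟨⟨a, rfl⟩⟩⟩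

private lemma k5_of_sets {V : Type*} (G : SimpleGraph V) (a b c d : V) (S : Set V)
    (hcon : (G.induce S).Connected)
    (hab : G.Adj a b) (hac : G.Adj a c) (had : G.Adj a d)
    (hbc : G.Adj b c) (hbd : G.Adj b d) (hcd : G.Adj c d)
    (haS : a ∉ S) (hbS : b ∉ S) (hcS : c ∉ S) (hdS : d ∉ S)
    (ja : ∃ s ∈ S, G.Adj a s) (jb : ∃ s ∈ S, G.Adj b s)
    (jc : ∃ s ∈ S, G.Adj c s) (jd : ∃ s ∈ S, G.Adj d s) :
    G.HasMinor (⊤ : SimpleGraph (Fin 5)) := by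
  have hSne : S.Nonempty := ja.imp fun s h => h.1
  have nab := hab.ne; have nac := hac.ne; have nad := had.ne
  have nbc := hbc.ne; have nbd := hbd.ne; have ncd := hcd.ne
  refine ⟨![{a},{b},{c},{d},S], ?_, ?_, ?_, ?_⟩
  · intro w; fin_cases w <;> simp [hSne]
  · intro w; fin_cases w <;>
      first | exact connected_induce_singleton G _ | exact hcon
  · intro w₁ w₂ hne
    fin_cases w₁ <;> fin_cases w₂ <;>
      simp_all [Set.disjoint_singleton_left, Set.disjoint_singleton_right, eq_comm]
  · intro w₁ w₂ hadj
    obtain ⟨sa, hsa, ha⟩ := ja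
    obtain ⟨sb, hsb, hb⟩ := jb
    obtain ⟨sc, hsc, hc⟩ := jc
    obtain ⟨sd, hsd, hd⟩ := jd
    fin_cases w₁ <;> fin_cases w₂ <;>
      first
        | exact absurd rfl hadj.ne
        | exact ⟨a, rfl, b, rfl, hab⟩
        | exact ⟨a, rfl, c, rfl, hac⟩
        | exact ⟨a, rfl, d, rfl, had⟩
        | exact ⟨a, rfl, sa, hsa, ha⟩
        | exact ⟨b, rfl, a, rfl, hab.symm⟩
        | exact ⟨b, rfl, c, rfl, hbc⟩
        | exact ⟨b, rfl, d, rfl, hbd⟩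
        | exact ⟨b, rfl, sb, hsb, hb⟩
        | exact ⟨c, rfl, a, rfl, hac.symm⟩
        | exact ⟨c, rfl, b, rfl, hbc.symm⟩
        | exact ⟨c, rfl, d, rfl, hcd⟩
        | exact ⟨c, rfl, sc, hsc, hc⟩
        | exact ⟨d, rfl, a, rfl, had.symm⟩
        | exact ⟨d, rfl, b, rfl, hbd.symm⟩
        | exact ⟨d, rfl, c, rfl, hcd.symm⟩
        | exact ⟨d, rfl, sd, hsd, hd⟩
        | exact ⟨sa, hsa, a, rfl, ha.symm⟩
        | exact ⟨sb, hsb, b, rfl, hb.symm⟩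
        | exact ⟨sc, hsc, c, rfl, hc.symm⟩
        | exact ⟨sd, hsd, d, rfl, hd.symm⟩

/-- Setting of Lemma 3.7 of the paper: `K` and `L` are maximal cliques meeting
exactly in `v`, with `K` a 4-clique, and `φ'` is a 2-clique-coloring of `G - v`
coloring `K - v` with one color and `L - v` with the other. Then every vertex
`q₁ ∉ K` forming a clique with `K - v` and colored differently from `K - v`
lies in a different component of `G - V(K - v)` than `v`. -/
theorem no_path_from_q1_to_v {V : Type*} [Fintype V]
    (G : SimpleGraph V)
    (hclaw : G.ClawFree) (hK5 : ¬ G.HasMinor (⊤ : SimpleGraph (Fin 5)))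
    (v : V) (K L : Set V)
    (hK : G.IsMaxClique K) (hL : G.IsMaxClique L)
    (hvK : v ∈ K) (hvL : v ∈ L) (hKL : K ∩ L = {v})
    (hK4 : K.ncard = 4)
    (φ' : {u : V // u ≠ v} → Fin 2)
    (hφ' : (G.induce {u : V | u ≠ v}).IsCliqueColoring φ')
    (cK cL : Fin 2) (hcKL : cK ≠ cL)
    (hcolK : ∀ u : {u : V // u ≠ v}, (u : V) ∈ K → φ' u = cK)
    (hcolL : ∀ u : {u : V // u ≠ v}, (u : V) ∈ L → φ' u = cL)
    (q₁ : {u : V // u ≠ v}) (hq₁K : (q₁ : V) ∉ K)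
    (hq₁clique : G.IsClique ((K \ {v}) ∪ {(q₁ : V)}))
    (hq₁col : φ' q₁ ≠ cK) :
    ¬ (G.induce (K \ {v})ᶜ).Reachable
        ⟨(q₁ : V), fun h => hq₁K h.1⟩ ⟨v, fun h => h.2 rfl⟩ := by
  intro hreach
  classical
  have hvnot : v ∉ K \ {v} := fun h => h.2 rfl
  have hins : insert v (K \ {v}) = K := by
    rw [Set.insert_diff_singleton]; exact Set.insert_eq_self.mpr hvK
  have h3 : (K \ {v}).ncard = 3 := by
    have h := Set.ncard_insert_of_notMem hvnot (Set.toFinite _)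
    rw [hins, hK4] at h; omega
  obtain ⟨a, b, c, hab0, hac0, hbc0, hKv⟩ := Set.ncard_eq_three.mp h3
  have haK : a ∈ K \ {v} := by rw [hKv]; simp
  have hbK : b ∈ K \ {v} := by rw [hKv]; simp
  have hcK : c ∈ K \ {v} := by rw [hKv]; simp
  obtain ⟨w⟩ := hreach
  have hne : (⟨v, fun h => h.2 rfl⟩ : ((K \ {v})ᶜ : Set V)) ≠
      ⟨(q₁ : V), fun h => hq₁K h.1⟩ := by
    intro h
    exact q₁.2 (congrArg Subtype.val h).symm
  obtain ⟨x, hvx, q, hq⟩ := SimpleGraph.Walk.exists_eq_cons_of_ne hne w.toPath.reverse.val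
  have hpath : (SimpleGraph.Walk.cons hvx q).IsPath := hq ▸ w.toPath.reverse.isPath
  rw [SimpleGraph.Walk.cons_isPath_iff] at hpath
  -- map the walk q into G
  let Q : G.Walk (x : V) (q₁ : V) :=
    q.map (SimpleGraph.Embedding.induce ((K \ {v})ᶜ : Set V)).toHom
  set S : Set V := {u | u ∈ Q.support} with hS
  have hsubK : ∀ u ∈ S, u ∉ K \ {v} := by
    intro u hu
    have hu' : u ∈ Q.support := hu
    dsimp only [Q] at hu'
    replace hu' := Eq.mp (congrArg (u ∈ ·) (SimpleGraph.Walk.support_map _ _)) hu'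
    obtain ⟨y, _, hyu⟩ := List.mem_map.mp hu'
    exact hyu ▸ y.2
  have hvS : v ∉ S := by
    intro hv
    have hv' : v ∈ Q.support := hv
    dsimp only [Q] at hv'
    replace hv' := Eq.mp (congrArg (v ∈ ·) (SimpleGraph.Walk.support_map _ _)) hv'
    obtain ⟨y, hy, hyv⟩ := List.mem_map.mp hv'
    exact hpath.2 (by rwa [show y = ⟨v, fun h => h.2 rfl⟩ from Subtype.ext hyv] at hy)
  have hq₁S : (q₁ : V) ∈ S := Q.end_mem_support
  have hxS : (x : V) ∈ S := Q.start_mem_support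
  have hcon : (G.induce S).Connected := Q.connected_induce_support
  have hKcl := hK.1
  have adjK : ∀ u₁ ∈ K \ {v}, ∀ u₂ ∈ K \ {v}, u₁ ≠ u₂ → G.Adj u₁ u₂ := by
    intro u₁ h₁ u₂ h₂ h
    exact hKcl h₁.1 h₂.1 h
  have adjq : ∀ u ∈ K \ {v}, G.Adj u (q₁ : V) := by
    intro u hu
    exact hq₁clique (Set.mem_union_left _ hu) (Set.mem_union_right _ rfl)
      (fun h => hq₁K (h ▸ hu.1))
  refine hK5 (k5_of_sets G a b c v S hcon
    (adjK a haK b hbK hab0) (adjK a haK c hcK hac0) (hKcl haK.1 hvK haK.2)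
    (adjK b hbK c hcK hbc0) (hKcl hbK.1 hvK hbK.2) (hKcl hcK.1 hvK hcK.2)
    (fun h => hsubK a h haK) (fun h => hsubK b h hbK) (fun h => hsubK c h hcK) hvS
    ⟨(q₁ : V), hq₁S, adjq a haK⟩ ⟨(q₁ : V), hq₁S, adjq b hbK⟩
    ⟨(q₁ : V), hq₁S, adjq c hcK⟩ ⟨(x : V), hxS, hvx⟩)
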